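/- In the H2H index built on a tree decomposition T, for any two vertices s and t whose tree nodes are not in ancestor–descendant relation, let X be their lowest common ancestor. Then d_G(s,t) = min over positions i ∈ X.pos of (X(s).dis[i] + X(t).dis[i]), i.e., the vertices of the LCA bag (equivalently, the set indexed by X.pos, a subset of common ancestors) form a vertex separator between s and t, and exactly one of them lies on a shortest s–t path. -/

import Mathlib

open scoped ENNReal

/-- Cost of the walk `s :: p ++ [t]`: `p` is the list of intermediate vertices, a missing
edge has weight `⊤`. -/
noncomputable def pathCost {V : Type*} (w : V → V → ℝ≥0∞) : V → List V → V → ℝ≥0∞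
  | s, [], t => w s t
  | s, x :: xs, t => w s x + pathCost w x xs t

/-- Shortest-path distance induced by the weight function `w`. -/
noncomputable def gdist {V : Type*} [DecidableEq V] (w : V → V → ℝ≥0∞) (s t : V) : ℝ≥0∞ :=
  if s = t then 0 else ⨅ p : List V, pathCost w s p t

/-- H2H query correctness: if the bag of the LCA of two (non-ancestor-descendant) tree nodes
`X(s)`, `X(t)` separates `s` from `t` in `G`, then
`d_G(s,t) = min over bag vertices c of (d_G(s,c) + d_G(c,t))` — i.e. the minimum over the
positions indexed by `X.pos` of `X(s).dis[i] + X(t).dis[i]` — and some vertex of the bag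
lies on a shortest `s`–`t` path (the minimum is attained). -/
lemma pathCost_append {V : Type*} (w : V → V → ℝ≥0∞) (s b t : V) :
    ∀ p1 p2 : List V, pathCost w s (p1 ++ b :: p2) t = pathCost w s p1 b + pathCost w b p2 t := by
  intro p1
  induction p1 generalizing s with
  | nil => intro p2; simp [pathCost]
  | cons x xs ih => intro p2; simp [pathCost, ih, add_assoc]

lemma gdist_le_pathCost {V : Type*} [DecidableEq V] (w : V → V → ℝ≥0∞) (s t : V) (p : List V) :
    gdist w s t ≤ pathCost w s p t := by
  unfold gdist
  split
  · exact zero_le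
  · exact iInf_le _ p

lemma gdist_triangle {V : Type*} [DecidableEq V] (w : V → V → ℝ≥0∞) (s b t : V) :
    gdist w s t ≤ gdist w s b + gdist w b t := by
  by_cases hsb : s = b
  · subst hsb; simp [gdist]
  by_cases hbt : b = t
  · subst hbt; simp [gdist]
  by_cases hstt : s = t
  · subst hstt; simp [gdist]
  simp only [gdist, if_neg hsb, if_neg hbt, if_neg hstt]
  rw [ENNReal.iInf_add]
  refine le_iInf fun p => ?_
  rw [ENNReal.add_iInf]
  refine le_iInf fun q => ?_
  rw [← pathCost_append]
  exact iInf_le _ _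

theorem h2h_lca_bag_query_correctness
    {V : Type*} [Fintype V] [DecidableEq V] (w : V → V → ℝ≥0∞)
    (hsymm : ∀ u v, w u v = w v u)
    (s t : V) (bag : Finset V) (hne : bag.Nonempty)
    (hst : s ≠ t) (hs : s ∉ bag) (ht : t ∉ bag)
    -- the LCA bag separates s from t: every walk from s to t passes through the bag
    (hsep : ∀ p : List V, pathCost w s p t ≠ ⊤ → ∃ b ∈ p, b ∈ bag) :
    (gdist w s t = ⨅ b ∈ (bag : Set V), gdist w s b + gdist w b t) ∧
    (∃ b ∈ bag, gdist w s t = gdist w s b + gdist w b t) := by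
  have hmain : gdist w s t = ⨅ b ∈ (bag : Set V), gdist w s b + gdist w b t := by
    apply le_antisymm
    · exact le_iInf₂ fun b _ => gdist_triangle w s b t
    · rw [gdist, if_neg hst]
      refine le_iInf fun p => ?_
      by_cases hp : pathCost w s p t = ⊤
      · rw [hp]; exact le_top
      · obtain ⟨b, hbp, hb⟩ := hsep p hp
        obtain ⟨p1, p2, rfl⟩ := List.append_of_mem hbp
        rw [pathCost_append]
        calc (⨅ b ∈ (bag : Set V), gdist w s b + gdist w b t)
            ≤ gdist w s b + gdist w b t := iInf₂_le b hb
          _ ≤ pathCost w s p1 b + pathCost w b p2 t :=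
              add_le_add (gdist_le_pathCost w s b p1) (gdist_le_pathCost w b t p2)
  refine ⟨hmain, ?_⟩
  obtain ⟨b, hb, hmin⟩ := bag.exists_mem_eq_inf' hne (fun b => gdist w s b + gdist w b t)
  refine ⟨b, hb, ?_⟩
  rw [hmain, ← hmin, Finset.inf'_eq_inf hne, Finset.inf_eq_iInf]
  simp
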